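/- arXiv:1909.05903 — 6 statements merged into one kernel-verified Lean document; each statement's English description precedes it below -/
import Mathlib

section
/- For all u, v ∈ S_o with u ≼ v, one has I_o(u) ≥ I_o(v) and H_o(u) ≼ H_o(v); that is, the mapping H_o : S_o → S_o is increasing with respect to the partial order ≼. -/
open scoped BigOperators

/-- The space `S_o`: the empty tuple together with all nondecreasing tuples of length at most `K`
with entries in `[0,1]`, represented as sorted lists of reals. -/
def So (K : ℕ) : Type :=
  {l : List ℝ // l.length ≤ K ∧ l.Pairwise (· ≤ ·) ∧ ∀ x ∈ l, x ∈ Set.Icc (0 : ℝ) 1}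

/-- The partial order `≼` (on the underlying lists): `u ≼ v` iff `dim u ≥ dim v` and
`u_i ≤ v_i` for every `i < dim v`. -/
def preceqL (a b : List ℝ) : Prop :=
  b.length ≤ a.length ∧ ∀ i < b.length, a.getD i 0 ≤ b.getD i 0

/-- `I_o(u) = max { n ∈ {0,…,dim u} : Σ_{i=1}^n u_i ≤ α n }` (the empty sum is `0`). -/
noncomputable def Io (α : ℝ) (l : List ℝ) : ℕ :=
  ((Finset.range (l.length + 1)).filter
    fun n => (∑ i ∈ Finset.range n, l.getD i 0) ≤ α * n).max' ⟨0, by simp⟩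

/-- `H_o(u) = (u_1,…,u_{I_o(u)})`, the empty tuple if `I_o(u) = 0`. -/
noncomputable def Ho (α : ℝ) (l : List ℝ) : List ℝ :=
  l.take (Io α l)

lemma Io_mem (α : ℝ) (l : List ℝ) :
    Io α l ∈ (Finset.range (l.length + 1)).filter
      fun n => (∑ i ∈ Finset.range n, l.getD i 0) ≤ α * n :=
  Finset.max'_mem _ _

lemma Io_le_length (α : ℝ) (l : List ℝ) : Io α l ≤ l.length := by
  have := Io_mem α l
  simp only [Finset.mem_filter, Finset.mem_range] at this
  omega

/-- For all `u ≼ v` in `S_o`, one has `I_o(u) ≥ I_o(v)` and `H_o(u) ≼ H_o(v)`;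
i.e. `H_o` is increasing with respect to `≼`. -/
theorem stmt_3 (K : ℕ) (hK : 1 ≤ K) (α : ℝ) (hα : α ∈ Set.Ioc (0 : ℝ) 1)
    (u v : So K) (huv : preceqL u.1 v.1) :
    Io α v.1 ≤ Io α u.1 ∧ preceqL (Ho α u.1) (Ho α v.1) := by
  obtain ⟨hlen, hle⟩ := huv
  have hvmem := Io_mem α v.1
  simp only [Finset.mem_filter, Finset.mem_range] at hvmem
  have hIv : Io α v.1 ≤ v.1.length := by omega
  have hIle : Io α v.1 ≤ Io α u.1 := by
    apply Finset.le_max'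
    simp only [Finset.mem_filter, Finset.mem_range]
    constructor
    · omega
    · calc (∑ i ∈ Finset.range (Io α v.1), u.1.getD i 0)
          ≤ ∑ i ∈ Finset.range (Io α v.1), v.1.getD i 0 := by
            apply Finset.sum_le_sum
            intro i hi
            exact hle i (lt_of_lt_of_le (Finset.mem_range.mp hi) hIv)
        _ ≤ α * (Io α v.1) := hvmem.2
  refine ⟨hIle, ?_, ?_⟩
  · simp only [Ho, List.length_take]
    have := Io_le_length α u.1
    omega
  · intro i hi
    simp only [Ho, List.length_take] at hi ⊢
    have hi' : i < Io α v.1 := lt_of_lt_of_le hi (min_le_left _ _)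
    have hiv : i < v.1.length := lt_of_lt_of_le hi (min_le_right _ _)
    rw [List.getD_eq_getElem?_getD, List.getD_eq_getElem?_getD,
      List.getElem?_take_of_lt (lt_of_lt_of_le hi' hIle),
      List.getElem?_take_of_lt hi',
      ← List.getD_eq_getElem?_getD, ← List.getD_eq_getElem?_getD]
    exact hle i hiv
end

section
/- Let u = (u_1,…,u_m) ∈ [0,1]^m with m ≥ 1 (not necessarily sorted), and let k_1,…,k_l ∈ {1,…,m} be distinct indices satisfying Σ_{i=1}^{l} u_{k_i} ≤ αl. Then H_o([u]) ≼ [(u_{k_1},…,u_{k_l})]. -/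
open scoped BigOperators

/-- `[·]`: the nondecreasing rearrangement (order statistic) of a finite tuple. -/
noncomputable def sortR (l : List ℝ) : List ℝ :=
  l.insertionSort (· ≤ ·)

lemma fin_strictMono_le {a b : ℕ} (f : Fin a → Fin b) (hf : StrictMono f) :
    ∀ i : Fin a, (i : ℕ) ≤ (f i : ℕ) := by
  rintro ⟨i, hi⟩
  induction i with
  | zero => exact Nat.zero_le _
  | succ n ih =>
    have h1 : (⟨n, Nat.lt_of_succ_lt hi⟩ : Fin a) < ⟨n + 1, hi⟩ := by
      simp [Fin.lt_def]
    have h2 : (f ⟨n, Nat.lt_of_succ_lt hi⟩ : ℕ) < (f ⟨n + 1, hi⟩ : ℕ) := hf h1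
    have h3 : n ≤ (f ⟨n, Nat.lt_of_succ_lt hi⟩ : ℕ) := ih (Nat.lt_of_succ_lt hi)
    show n + 1 ≤ (f ⟨n + 1, hi⟩ : ℕ)
    omega

lemma sum_eq_sum_getD (L : List ℝ) :
    L.sum = ∑ i ∈ Finset.range L.length, L.getD i 0 := by
  induction L with
  | nil => simp
  | cons a t ih =>
    rw [List.sum_cons, List.length_cons, Finset.sum_range_succ']
    simp [ih, add_comm]

/-- Let `u = (u_1,…,u_m) ∈ [0,1]^m` with `m ≥ 1` and let `k_1,…,k_l ∈ {1,…,m}` be distinct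
indices with `Σ_{i=1}^l u_{k_i} ≤ α l`.  Then `H_o([u]) ≼ [(u_{k_1},…,u_{k_l})]`. -/
theorem stmt_4 (α : ℝ) (hα : α ∈ Set.Ioc (0 : ℝ) 1) (m l : ℕ) (hm : 1 ≤ m)
    (u : Fin m → ℝ) (hu : ∀ i, u i ∈ Set.Icc (0 : ℝ) 1)
    (k : Fin l → Fin m) (hk : Function.Injective k)
    (hsum : (∑ i, u (k i)) ≤ α * l) :
    preceqL (Ho α (sortR (List.ofFn u))) (sortR (List.ofFn (u ∘ k))) := by
  set s := sortR (List.ofFn u) with hs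
  set v := sortR (List.ofFn (u ∘ k)) with hv
  have hsl : s.length = m := by simp [hs, sortR]
  have hvl : v.length = l := by simp [hv, sortR]
  have hlm : l ≤ m := by
    simpa using Fintype.card_le_of_injective k hk
  have hsorted_s : s.Pairwise (· ≤ ·) := List.pairwise_insertionSort _ _
  have hsorted_v : v.Pairwise (· ≤ ·) := List.pairwise_insertionSort _ _
  -- subperm
  have h2 : List.Subperm (List.map k (List.finRange l)) (List.finRange m) :=
    List.subperm_of_subset ((List.nodup_finRange l).map hk)
      (fun x _ => List.mem_finRange x)
  have h3 : List.Subperm (List.ofFn (u ∘ k)) (List.ofFn u) := by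
    rw [List.ofFn_eq_map, List.ofFn_eq_map (f := u), ← List.map_map]
    obtain ⟨w, hw1, hw2⟩ := h2
    exact ⟨w.map u, hw1.map u, hw2.map u⟩
  have hsub : List.Sublist v s := by
    refine List.sublist_of_subperm_of_pairwise ?_ hsorted_v hsorted_s
    exact ((List.perm_insertionSort _ _).subperm).trans
      (h3.trans ((List.perm_insertionSort _ _).symm.subperm))
  obtain ⟨f, hf⟩ := List.sublist_iff_exists_fin_orderEmbedding_get_eq.mp hsub
  -- pointwise comparison
  have hpt : ∀ i, i < l → s.getD i 0 ≤ v.getD i 0 := by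
    intro i hi
    have hiv : i < v.length := hvl ▸ hi
    have his : i < s.length := by omega
    set ix : Fin v.length := ⟨i, hiv⟩
    have hle : (⟨i, his⟩ : Fin s.length) ≤ f ix := by
      rw [Fin.le_def]
      exact fin_strictMono_le f f.strictMono ix
    have h4 : s.get ⟨i, his⟩ ≤ s.get (f ix) :=
      List.Pairwise.rel_get_of_le hsorted_s hle
    rw [← hf ix] at h4
    rw [List.getD_eq_getElem _ _ his, List.getD_eq_getElem _ _ hiv]
    simpa using h4
  -- v.sum
  have hvsum : v.sum = ∑ i, u (k i) := by
    show (List.insertionSort (· ≤ ·) (List.ofFn (u ∘ k))).sum = _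
    rw [(List.perm_insertionSort _ _).sum_eq]
    exact List.sum_ofFn
  -- l is in the filter set
  have hIo : l ≤ Io α s := by
    apply Finset.le_max'
    rw [Finset.mem_filter, Finset.mem_range]
    refine ⟨by omega, ?_⟩
    calc (∑ i ∈ Finset.range l, s.getD i 0)
        ≤ ∑ i ∈ Finset.range l, v.getD i 0 := by
          apply Finset.sum_le_sum
          intro i hi
          exact hpt i (Finset.mem_range.mp hi)
      _ = v.sum := by rw [sum_eq_sum_getD, hvl]
      _ ≤ α * l := hvsum ▸ hsum
  constructor
  · rw [hvl, Ho, List.length_take]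
    exact le_min hIo (by omega)
  · intro i hi
    rw [hvl] at hi
    have his : i < s.length := by omega
    have hit : i < (Ho α s).length := by
      rw [Ho, List.length_take]
      exact lt_min (lt_of_lt_of_le hi hIo) his
    rw [List.getD_eq_getElem _ _ hit]
    unfold Ho at hit ⊢
    rw [List.getElem_take]
    rw [← List.getD_eq_getElem _ _ his]
    exact hpt i hi
end

section
/- Let u = (u_1,…,u_m) ∈ [0,1]^m with m ≥ 1. Then: (i) Σ_{i=1}^{I_o([u])} [u]_i ≤ α · I_o([u]); and (ii) for every subset S ⊆ {1,…,m} with Σ_{i∈S} u_i ≤ α|S|, one has |S| ≤ I_o([u]). In other words, among all subsets S of {1,…,m} whose coordinate sum satisfies Σ_{i∈S} u_i ≤ α|S|, the set of indices of the I_o([u]) smallest coordinates satisfies the constraint and has maximal cardinality. -/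
open scoped BigOperators

lemma le_orderEmb_apply {n m : ℕ} (f : Fin n ↪o Fin m) (i : Fin n) : (i : ℕ) ≤ (f i : ℕ) := by
  obtain ⟨k, hk⟩ := i
  induction k with
  | zero => exact Nat.zero_le _
  | succ k ih =>
    have h1 : k ≤ ((f ⟨k, Nat.lt_of_succ_lt hk⟩ : Fin m) : ℕ) := by
      simpa using ih (Nat.lt_of_succ_lt hk)
    have h2 : ((f ⟨k, Nat.lt_of_succ_lt hk⟩ : Fin m) : ℕ) < ((f ⟨k + 1, hk⟩ : Fin m) : ℕ) :=
      Fin.lt_def.mp (f.strictMono (by simp [Fin.lt_def]))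
    show k + 1 ≤ _
    omega

/-- Sum of the `n` smallest entries (first `n` entries of the ofFn of a monotone `v`) is at
most the sum over any subset of cardinality `n`. -/
lemma sum_range_le_sum_subset {m n : ℕ} (v : Fin m → ℝ) (hv : Monotone v)
    (T : Finset (Fin m)) (hT : T.card = n) :
    (∑ i ∈ Finset.range n, (List.ofFn v).getD i 0) ≤ ∑ j ∈ T, v j := by
  have hnm : n ≤ m := by simpa [hT] using T.card_le_univ.trans_eq (by simp)
  set f : Fin n ↪o Fin m := T.orderEmbOfFin hT
  have hTsum : ∑ j ∈ T, v j = ∑ i : Fin n, v (f i) := by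
    have hT' : T = Finset.image f Finset.univ := by
      ext x
      simp only [Finset.mem_image, Finset.mem_univ, true_and]
      constructor
      · intro hx
        have : x ∈ Set.range f := by rw [Finset.range_orderEmbOfFin]; exact hx
        obtain ⟨i, hi⟩ := this
        exact ⟨i, hi⟩
      · rintro ⟨i, rfl⟩
        exact Finset.orderEmbOfFin_mem T hT i
    rw [hT', Finset.sum_image (fun a _ b _ h => f.injective h)]
  rw [hTsum]
  have hlhs : (∑ i ∈ Finset.range n, (List.ofFn v).getD i 0)
      = ∑ i : Fin n, v (Fin.castLE hnm i) := by
    rw [← Fin.sum_univ_eq_sum_range]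
    refine Finset.sum_congr rfl fun i _ => ?_
    rw [List.getD_eq_getElem _ _ (by simp [List.length_ofFn]; exact i.2.trans_le hnm)]
    simp [List.getElem_ofFn, Fin.castLE]
  rw [hlhs]
  refine Finset.sum_le_sum fun i _ => hv ?_
  exact Fin.le_def.mpr (le_orderEmb_apply f i)

/-- Let `u ∈ [0,1]^m` with `m ≥ 1`.  Then (i) the sum of the `I_o([u])` smallest coordinates
of `u` is at most `α · I_o([u])`, and (ii) every subset `S ⊆ {1,…,m}` with
`Σ_{i∈S} u_i ≤ α|S|` satisfies `|S| ≤ I_o([u])`: among all subsets satisfying the constraint,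
the indices of the `I_o([u])` smallest coordinates satisfy it with maximal cardinality. -/
theorem stmt_6 (α : ℝ) (hα : α ∈ Set.Ioc (0 : ℝ) 1) (m : ℕ) (hm : 1 ≤ m)
    (u : Fin m → ℝ) (hu : ∀ i, u i ∈ Set.Icc (0 : ℝ) 1) :
    (∑ i ∈ Finset.range (Io α (sortR (List.ofFn u))), (sortR (List.ofFn u)).getD i 0)
        ≤ α * (Io α (sortR (List.ofFn u))) ∧
    ∀ S : Finset (Fin m), (∑ i ∈ S, u i) ≤ α * S.card →
      S.card ≤ Io α (sortR (List.ofFn u)) := by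
  set l : List ℝ := sortR (List.ofFn u) with hl
  have hlen : l.length = m := by simp [hl, sortR, List.length_insertionSort]
  have hmem : Io α l ∈ (Finset.range (l.length + 1)).filter
      fun n => (∑ i ∈ Finset.range n, l.getD i 0) ≤ α * n := by
    exact Finset.max'_mem _ _
  obtain ⟨-, h1⟩ := Finset.mem_filter.mp hmem
  refine ⟨h1, fun S hS => ?_⟩
  -- identify l with ofFn of the monotone rearrangement
  set σ : Equiv.Perm (Fin m) := Tuple.sort u with hσ
  have hv : Monotone (u ∘ σ) := Tuple.monotone_sort u
  have hleq : l = List.ofFn (u ∘ σ) := by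
    exact List.Perm.eq_of_pairwise'
      (List.pairwise_insertionSort _ _)
      (List.sortedLE_iff_pairwise.mp (List.sortedLE_ofFn_iff.mpr hv))
      ((List.perm_insertionSort _ _).trans (σ.ofFn_comp_perm u).symm)
  -- transport S through σ
  set T : Finset (Fin m) := S.image σ.symm with hT
  have hTcard : T.card = S.card := Finset.card_image_of_injective _ σ.symm.injective
  have hTsum : ∑ j ∈ T, (u ∘ σ) j = ∑ i ∈ S, u i := by
    rw [hT, Finset.sum_image (fun a _ b _ h => σ.symm.injective h)]
    exact Finset.sum_congr rfl fun i _ => by simp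
  have key : (∑ i ∈ Finset.range S.card, l.getD i 0) ≤ ∑ i ∈ S, u i := by
    rw [hleq, ← hTsum]
    exact sum_range_le_sum_subset (u ∘ σ) hv T hTcard
  -- S.card belongs to the filter set
  have hcard : S.card ∈ (Finset.range (l.length + 1)).filter
      fun n => (∑ i ∈ Finset.range n, l.getD i 0) ≤ α * n := by
    refine Finset.mem_filter.mpr ⟨Finset.mem_range.mpr ?_, key.trans hS⟩
    rw [hlen]
    exact Nat.lt_succ_of_le (by simpa using S.card_le_univ)
  exact Finset.le_max' _ _ hcard
end

section
/- Let μ be a σ-finite measure on a measurable space, and let p and q be probability densities with respect to μ (nonnegative measurable functions with ∫ p dμ = ∫ q dμ = 1) having the same support, i.e. μ-a.e. p(x) > 0 iff q(x) > 0. Define the likelihood ratio L(x) = q(x)/p(x) on {p > 0} (and L(x) = 0 elsewhere). For δ ∈ [0,1], let μ_δ be the probability measure with density δq + (1−δ)p with respect to μ. Then for every bounded nondecreasing measurable function g : ℝ → ℝ and all 0 ≤ δ₁ ≤ δ₂ ≤ 1, ∫ g(L(x)) dμ_{δ₁}(x) ≤ ∫ g(L(x)) dμ_{δ₂}(x); that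 is, the law of L under μ_{δ₂} stochastically dominates the law of L under μ_{δ₁}. -/
open MeasureTheory
open scoped ENNReal NNReal

/-- Stochastic monotonicity of the likelihood ratio under a mixture: if `Z_δ` has density
`δq + (1−δ)p` and `L = q/p`, then for every bounded nondecreasing measurable `g` and
`δ₁ ≤ δ₂`, one has `E[g(L(Z_{δ₁}))] ≤ E[g(L(Z_{δ₂}))]`. -/
theorem stmt_9 {X : Type*} [MeasurableSpace X] (μ : Measure X) [SigmaFinite μ]
    (p q : X → ℝ) (hpm : Measurable p) (hqm : Measurable q)
    (hp0 : ∀ x, 0 ≤ p x) (hq0 : ∀ x, 0 ≤ q x)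
    (hp1 : ∫ x, p x ∂μ = 1) (hq1 : ∫ x, q x ∂μ = 1)
    (hsupp : ∀ᵐ x ∂μ, 0 < p x ↔ 0 < q x)
    (L : X → ℝ) (hL : ∀ x, L x = if 0 < p x then q x / p x else 0)
    (g : ℝ → ℝ) (hgm : Measurable g) (hgmono : Monotone g)
    (C : ℝ) (hgbd : ∀ y, |g y| ≤ C)
    (δ₁ δ₂ : ℝ) (h01 : 0 ≤ δ₁) (h12 : δ₁ ≤ δ₂) (h21 : δ₂ ≤ 1) :
    ∫ x, g (L x) ∂(μ.withDensity fun x => ENNReal.ofReal (δ₁ * q x + (1 - δ₁) * p x))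
      ≤ ∫ x, g (L x) ∂(μ.withDensity fun x => ENNReal.ofReal (δ₂ * q x + (1 - δ₂) * p x)) := by
  have hLm : Measurable L := by
    have : Measurable fun x => if 0 < p x then q x / p x else 0 :=
      Measurable.ite (measurableSet_lt measurable_const hpm) (hqm.div hpm) measurable_const
    convert this using 1; ext x; exact hL x
  have hpInt : Integrable p μ := by
    by_contra h; rw [integral_undef h] at hp1; norm_num at hp1
  have hqInt : Integrable q μ := by
    by_contra h; rw [integral_undef h] at hq1; norm_num at hq1
  have hgL : AEStronglyMeasurable (fun x => g (L x)) μ :=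
    (hgm.comp hLm).aestronglyMeasurable
  have hbd : ∃ D, ∀ x, ‖g (L x)‖ ≤ D := ⟨C, fun x => hgbd (L x)⟩
  have hIntq : Integrable (fun x => q x * g (L x)) μ := by
    have := hqInt.bdd_mul hgL (ae_of_all _ hbd.choose_spec)
    simpa [mul_comm] using this
  have hIntp : Integrable (fun x => p x * g (L x)) μ := by
    have := hpInt.bdd_mul hgL (ae_of_all _ hbd.choose_spec)
    simpa [mul_comm] using this
  have key : ∀ δ : ℝ, 0 ≤ δ → δ ≤ 1 →
      ∫ x, g (L x) ∂(μ.withDensity fun x => ENNReal.ofReal (δ * q x + (1 - δ) * p x))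
        = δ * ∫ x, q x * g (L x) ∂μ + (1 - δ) * ∫ x, p x * g (L x) ∂μ := by
    intro δ hδ0 hδ1
    have hnn : ∀ x, 0 ≤ δ * q x + (1 - δ) * p x := fun x =>
      add_nonneg (mul_nonneg hδ0 (hq0 x)) (mul_nonneg (by linarith) (hp0 x))
    have hfm : Measurable fun x => (δ * q x + (1 - δ) * p x).toNNReal :=
      ((hqm.const_mul δ).add (hpm.const_mul (1 - δ))).real_toNNReal
    have h1 : (fun x => ENNReal.ofReal (δ * q x + (1 - δ) * p x))
        = fun x => ((δ * q x + (1 - δ) * p x).toNNReal : ℝ≥0∞) := rfl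
    rw [h1, integral_withDensity_eq_integral_smul hfm]
    simp only [NNReal.smul_def, Real.coe_toNNReal _ (hnn _), smul_eq_mul]
    have h2 : (fun x => (δ * q x + (1 - δ) * p x) * g (L x))
        = fun x => δ * (q x * g (L x)) + (1 - δ) * (p x * g (L x)) := by
      funext x; ring
    rw [h2, integral_add (hIntq.const_mul δ) (hIntp.const_mul (1 - δ)),
      integral_const_mul, integral_const_mul]
  -- main inequality : ∫ p g(L) ≤ ∫ q g(L)
  have hA : ∫ x, p x * g (L x) ∂μ ≤ ∫ x, q x * g (L x) ∂μ := by
    have hptwise : ∀ᵐ x ∂μ, (q x - p x) * g 1 ≤ (q x - p x) * g (L x) := by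
      filter_upwards [hsupp] with x hx
      by_cases hp : 0 < p x
      · have hLx : L x = q x / p x := by rw [hL x, if_pos hp]
        have hq : q x = p x * L x := by
          rw [hLx]; field_simp
        rcases le_total 1 (L x) with h | h
        · have hg := hgmono h
          nlinarith [mul_nonneg (mul_nonneg (hp0 x) (sub_nonneg.mpr h)) (sub_nonneg.mpr hg)]
        · have hg := hgmono h
          nlinarith [mul_nonneg (mul_nonneg (hp0 x) (sub_nonneg.mpr h)) (sub_nonneg.mpr hg)]
      · have hpx : p x = 0 := le_antisymm (not_lt.mp hp) (hp0 x)
        have hqx : q x = 0 := le_antisymm (not_lt.mp (fun h => hp (hx.mpr h))) (hq0 x)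
        simp [hpx, hqx]
    have hInt1 : Integrable (fun x => (q x - p x) * g 1) μ := (hqInt.sub hpInt).mul_const _
    have hInt2 : Integrable (fun x => (q x - p x) * g (L x)) μ := by
      have h3 : (fun x => (q x - p x) * g (L x))
          = fun x => q x * g (L x) - p x * g (L x) := by funext x; ring
      rw [h3]; exact hIntq.sub hIntp
    have hmono := integral_mono_ae hInt1 hInt2 hptwise
    have hzero : ∫ x, (q x - p x) * g 1 ∂μ = 0 := by
      rw [integral_mul_const, integral_sub hqInt hpInt, hq1, hp1]; ring
    have hsplit : ∫ x, (q x - p x) * g (L x) ∂μ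
        = (∫ x, q x * g (L x) ∂μ) - ∫ x, p x * g (L x) ∂μ := by
      rw [show (fun x => (q x - p x) * g (L x))
          = fun x => q x * g (L x) - p x * g (L x) from by funext x; ring,
        integral_sub hIntq hIntp]
    rw [hzero, hsplit] at hmono
    linarith
  rw [key δ₁ h01 (le_trans h12 h21), key δ₂ (le_trans h01 h12) h21]
  nlinarith [hA]
end

section
/- Let μ be a σ-finite measure, p and q probability densities with respect to μ with the same support (μ-a.e., p(x) > 0 iff q(x) > 0), L(x) = q(x)/p(x) on {p > 0} (and L(x) = 0 elsewhere), and θ ∈ (0,1). For x ∈ (0,1) define δ(x) = θ + (1−θ)x, c(x) = (1−θ)(1−x)/(θ + (1−θ)x), and h_x(z) = L(z)/(L(z) + c(x)). Then for all 0 < x ≤ x' < 1 and every a ∈ ℝ, ∫ 1{h_x(z) > a} (δ(x)q(z) + (1−δ(x))p(z)) dμ(z) ≤ ∫ 1{h_{x'}(z) > a} (δ(x')q(z) + (1−δ(x'))p(z)) dμ(z). That is, the law of h_{x'}(Z') for Z' with density δ(x')q + (1−δ(x'))p stochastically dominates the law of h_x(Z) for Z with density δ(x)q + (1−δ(x))p,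 so the Markov transition kernel K(x,·) given by the law of h_x(Z) is stochastically monotone in x. -/
open MeasureTheory

/-- Stochastic monotonicity of the Shiryaev posterior update kernel: for `0 < x ≤ x' < 1`,
with `δ(x) = θ + (1−θ)x`, `c(x) = (1−θ)(1−x)/(θ+(1−θ)x)` and `h_x(z) = L(z)/(L(z)+c(x))`,
the law of `h_{x'}(Z')` for `Z'` with density `δ(x')q + (1−δ(x'))p` stochastically dominates
the law of `h_x(Z)` for `Z` with density `δ(x)q + (1−δ(x))p`:
`P(h_x(Z) > a) ≤ P(h_{x'}(Z') > a)` for every real `a`. -/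
theorem stmt_11 {X : Type*} [MeasurableSpace X] (μ : Measure X) [SigmaFinite μ]
    (p q : X → ℝ) (hpm : Measurable p) (hqm : Measurable q)
    (hp0 : ∀ x, 0 ≤ p x) (hq0 : ∀ x, 0 ≤ q x)
    (hp1 : ∫ x, p x ∂μ = 1) (hq1 : ∫ x, q x ∂μ = 1)
    (hsupp : ∀ᵐ x ∂μ, 0 < p x ↔ 0 < q x)
    (L : X → ℝ) (hL : ∀ x, L x = if 0 < p x then q x / p x else 0)
    (θ : ℝ) (hθ : θ ∈ Set.Ioo (0 : ℝ) 1)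
    (x x' : ℝ) (hx : 0 < x) (hxx' : x ≤ x') (hx' : x' < 1) (a : ℝ) :
    (μ.withDensity fun z =>
        ENNReal.ofReal ((θ + (1 - θ) * x) * q z + (1 - (θ + (1 - θ) * x)) * p z))
      {z | a < L z / (L z + (1 - θ) * (1 - x) / (θ + (1 - θ) * x))}
    ≤ (μ.withDensity fun z =>
        ENNReal.ofReal ((θ + (1 - θ) * x') * q z + (1 - (θ + (1 - θ) * x')) * p z))
      {z | a < L z / (L z + (1 - θ) * (1 - x') / (θ + (1 - θ) * x'))} := by
  obtain ⟨hθ0, hθ1⟩ := hθ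
  set δ : ℝ := θ + (1 - θ) * x with hδdef
  set δ' : ℝ := θ + (1 - θ) * x' with hδ'def
  have hδpos : 0 < δ := by nlinarith
  have hδ'pos : 0 < δ' := by nlinarith
  have hδ'lt1 : δ' < 1 := by nlinarith
  have hδle : δ ≤ δ' := by nlinarith
  have hδlt1 : δ < 1 := lt_of_le_of_lt hδle hδ'lt1
  set c : ℝ := (1 - θ) * (1 - x) / δ with hcdef
  set c' : ℝ := (1 - θ) * (1 - x') / δ' with hc'def
  have hx1 : x < 1 := lt_of_le_of_lt hxx' hx'
  have hc'pos : 0 < c' := div_pos (by nlinarith) hδ'pos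
  have hcc' : c' ≤ c := by
    rw [hc'def, hcdef, div_le_div_iff₀ hδ'pos hδpos]
    nlinarith
  have hL0 : ∀ z, 0 ≤ L z := by
    intro z
    rw [hL z]
    split
    · exact div_nonneg (hq0 z) (hp0 z)
    · exact le_refl 0
  have hLm : Measurable L := by
    have : L = fun z => if 0 < p z then q z / p z else 0 := funext hL
    rw [this]
    exact Measurable.ite (measurableSet_lt measurable_const hpm) (hqm.div hpm) measurable_const
  set A : Set X := {z | a < L z / (L z + c)} with hAdef
  set A' : Set X := {z | a < L z / (L z + c')} with hA'def
  have hmA : MeasurableSet A :=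
    measurableSet_lt measurable_const ((hLm.div (hLm.add measurable_const)))
  have hmA' : MeasurableSet A' :=
    measurableSet_lt measurable_const ((hLm.div (hLm.add measurable_const)))
  have hsub : A ⊆ A' := by
    intro z hz
    have h1 : 0 < L z + c' := by linarith [hL0 z]
    have h2 : L z + c' ≤ L z + c := by linarith
    have : L z / (L z + c) ≤ L z / (L z + c') := by
      gcongr
      exact hL0 z
    exact lt_of_lt_of_le hz this
  -- integrability
  have hpint : Integrable p μ := by
    by_contra h
    rw [integral_undef h] at hp1
    norm_num at hp1
  have hqint : Integrable q μ := by
    by_contra h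
    rw [integral_undef h] at hq1
    norm_num at hq1
  -- key: ∫ p over A' ≤ ∫ q over A'
  have hkey : ∫ z in A', p z ∂μ ≤ ∫ z in A', q z ∂μ := by
    rcases lt_or_ge a 0 with ha | ha
    · have : A' = Set.univ := by
        ext z
        simp only [hA'def, Set.mem_setOf_eq, Set.mem_univ, iff_true]
        exact lt_of_lt_of_le ha (div_nonneg (hL0 z) (by linarith [hL0 z]))
      rw [this, Measure.restrict_univ, hp1, hq1]
    · rcases lt_or_ge a 1 with ha1 | ha1
      · set t : ℝ := a * c' / (1 - a) with htdef
        have ht0 : 0 ≤ t := div_nonneg (mul_nonneg ha hc'pos.le) (by linarith)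
        have hA'eq : A' = {z | t < L z} := by
          ext z
          simp only [hA'def, Set.mem_setOf_eq, htdef]
          have h1 : 0 < L z + c' := by linarith [hL0 z]
          rw [lt_div_iff₀ h1, div_lt_iff₀ (by linarith : (0:ℝ) < 1 - a)]
          constructor <;> intro h <;> nlinarith
        have hmt : MeasurableSet {z | t < L z} := measurableSet_lt measurable_const hLm
        rcases le_or_gt 1 t with ht1 | ht1
        · rw [hA'eq]
          apply setIntegral_mono_on hpint.integrableOn hqint.integrableOn hmt
          intro z hz
          have hz' : t < L z := hz
          have hpz : 0 < p z := by
            by_contra hpz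
            rw [hL z, if_neg hpz] at hz'
            linarith
          have hqz : q z = L z * p z := by
            rw [hL z, if_pos hpz]
            field_simp
          nlinarith
        · have hcompl : ∫ z in {z | t < L z}ᶜ, q z ∂μ ≤ ∫ z in {z | t < L z}ᶜ, p z ∂μ := by
            apply setIntegral_mono_on_ae hqint.integrableOn hpint.integrableOn hmt.compl
            filter_upwards [hsupp] with z hz hmem
            have hmem' : L z ≤ t := by
              simpa [Set.mem_compl_iff, Set.mem_setOf_eq, not_lt] using hmem
            by_cases hpz : 0 < p z
            · have hqz : q z = L z * p z := by
                rw [hL z, if_pos hpz]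
                field_simp
              nlinarith
            · have hp0' : p z = 0 := le_antisymm (not_lt.mp hpz) (hp0 z)
              have hq0' : q z ≤ 0 := by
                by_contra h
                exact hpz (hz.mpr (lt_of_not_ge h))
              linarith
          have e1 : (∫ z in {z | t < L z}, p z ∂μ) + ∫ z in {z | t < L z}ᶜ, p z ∂μ = 1 := by
            rw [integral_add_compl hmt hpint, hp1]
          have e2 : (∫ z in {z | t < L z}, q z ∂μ) + ∫ z in {z | t < L z}ᶜ, q z ∂μ = 1 := by
            rw [integral_add_compl hmt hqint, hq1]
          rw [hA'eq]
          linarith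
      · have : A' = ∅ := by
          ext z
          simp only [hA'def, Set.mem_setOf_eq, Set.mem_empty_iff_false, iff_false, not_lt]
          have h1 : 0 < L z + c' := by linarith [hL0 z]
          have : L z / (L z + c') < 1 := (div_lt_one h1).mpr (by linarith)
          linarith
        rw [this]
        simp
  -- integrability and nonnegativity of the mixture densities
  have hmix : ∀ d : ℝ, 0 ≤ d → d ≤ 1 →
      Integrable (fun z => d * q z + (1 - d) * p z) μ ∧
      ∀ z, 0 ≤ d * q z + (1 - d) * p z := by
    intro d hd0 hd1
    constructor
    · exact (hqint.const_mul d).add (hpint.const_mul (1 - d))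
    · intro z
      exact add_nonneg (mul_nonneg hd0 (hq0 z))
        (mul_nonneg (by linarith) (hp0 z))
  obtain ⟨hint1, hnn1⟩ := hmix δ hδpos.le hδlt1.le
  obtain ⟨hint2, hnn2⟩ := hmix δ' hδ'pos.le hδ'lt1.le
  calc (μ.withDensity fun z => ENNReal.ofReal (δ * q z + (1 - δ) * p z)) A
      ≤ (μ.withDensity fun z => ENNReal.ofReal (δ * q z + (1 - δ) * p z)) A' :=
        measure_mono hsub
    _ = ENNReal.ofReal (∫ z in A', δ * q z + (1 - δ) * p z ∂μ) := by
        rw [withDensity_apply _ hmA',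
          ofReal_integral_eq_lintegral_ofReal hint1.integrableOn
            (Filter.Eventually.of_forall fun z => hnn1 z)]
    _ ≤ ENNReal.ofReal (∫ z in A', δ' * q z + (1 - δ') * p z ∂μ) := by
        apply ENNReal.ofReal_le_ofReal
        rw [integral_add ((hqint.const_mul δ).integrableOn) ((hpint.const_mul (1 - δ)).integrableOn),
          integral_add ((hqint.const_mul δ').integrableOn) ((hpint.const_mul (1 - δ')).integrableOn),
          integral_const_mul, integral_const_mul, integral_const_mul, integral_const_mul]
        have h : 0 ≤ (δ' - δ) * ((∫ z in A', q z ∂μ) - ∫ z in A', p z ∂μ) :=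
          mul_nonneg (sub_nonneg.2 hδle) (sub_nonneg.2 hkey)
        calc δ * (∫ z in A', q z ∂μ) + (1 - δ) * ∫ z in A', p z ∂μ
            = δ' * (∫ z in A', q z ∂μ) + (1 - δ') * (∫ z in A', p z ∂μ)
              - (δ' - δ) * ((∫ z in A', q z ∂μ) - ∫ z in A', p z ∂μ) := by ring
          _ ≤ δ' * (∫ z in A', q z ∂μ) + (1 - δ') * ∫ z in A', p z ∂μ := sub_le_self _ h
    _ = (μ.withDensity fun z => ENNReal.ofReal (δ' * q z + (1 - δ') * p z)) A' := by
        rw [withDensity_apply _ hmA',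
          ofReal_integral_eq_lintegral_ofReal hint2.integrableOn
            (Filter.Eventually.of_forall fun z => hnn2 z)]
end

section
/- Let (Ω, F, P) be a probability space, A ∈ F an event, V an integrable real-valued random variable, and λ ≤ λ' real numbers. Then E[V · 1{V ≤ λ} · 1_A] · P({V ≤ λ'} ∩ A) ≤ E[V · 1{V ≤ λ'} · 1_A] · P({V ≤ λ} ∩ A). In particular, if both P({V ≤ λ} ∩ A) > 0 and P({V ≤ λ'} ∩ A) > 0, the conditional mean E[V | V ≤ λ, A] is nondecreasing in the threshold λ: E[V | V ≤ λ, A] ≤ E[V | V ≤ λ', A]. -/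
open MeasureTheory

/-- For an event `A`, an integrable random variable `V` and thresholds `λ ≤ λ'`:
`E[V 1{V≤λ} 1_A] · P({V≤λ'} ∩ A) ≤ E[V 1{V≤λ'} 1_A] · P({V≤λ} ∩ A)`.  In particular, when
both `P({V≤λ} ∩ A)` and `P({V≤λ'} ∩ A)` are positive, the conditional mean
`E[V | V ≤ λ, A]` is nondecreasing in the threshold `λ`. -/
theorem stmt_13 {Ω : Type*} [MeasurableSpace Ω] (P : Measure Ω) [IsProbabilityMeasure P]
    (A : Set Ω) (hA : MeasurableSet A)
    (V : Ω → ℝ) (hVm : Measurable V) (hVint : Integrable V P)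
    (l l' : ℝ) (hll' : l ≤ l') :
    (∫ ω in {ω | V ω ≤ l} ∩ A, V ω ∂P) * (P ({ω | V ω ≤ l'} ∩ A)).toReal
        ≤ (∫ ω in {ω | V ω ≤ l'} ∩ A, V ω ∂P) * (P ({ω | V ω ≤ l} ∩ A)).toReal ∧
    (0 < P ({ω | V ω ≤ l} ∩ A) → 0 < P ({ω | V ω ≤ l'} ∩ A) →
      (∫ ω in {ω | V ω ≤ l} ∩ A, V ω ∂P) / (P ({ω | V ω ≤ l} ∩ A)).toReal
        ≤ (∫ ω in {ω | V ω ≤ l'} ∩ A, V ω ∂P) / (P ({ω | V ω ≤ l'} ∩ A)).toReal) := by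
  set S := {ω | V ω ≤ l} ∩ A with hS
  set S' := {ω | V ω ≤ l'} ∩ A with hS'
  have hSm : MeasurableSet S := (measurableSet_le hVm measurable_const).inter hA
  have hS'm : MeasurableSet S' := (measurableSet_le hVm measurable_const).inter hA
  have hsub : S ⊆ S' := fun ω hω => ⟨le_trans hω.1 hll', hω.2⟩
  have hTm : MeasurableSet (S' \ S) := hS'm.diff hSm
  have hint : ∀ B : Set Ω, IntegrableOn V B P := fun B => hVint.integrableOn
  have hsplit : ∫ ω in S', V ω ∂P = (∫ ω in S, V ω ∂P) + ∫ ω in S' \ S, V ω ∂P := by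
    rw [← setIntegral_union Set.disjoint_sdiff_right hTm (hint S) (hint _),
      Set.union_diff_cancel hsub]
  have hms : (P S').toReal = (P S).toReal + (P (S' \ S)).toReal := by
    rw [← ENNReal.toReal_add (measure_ne_top P S) (measure_ne_top P _),
      ← measure_union Set.disjoint_sdiff_right hTm, Set.union_diff_cancel hsub]
  have hI : ∫ ω in S, V ω ∂P ≤ l * (P S).toReal := by
    calc ∫ ω in S, V ω ∂P ≤ ∫ _ω in S, l ∂P := by
          apply setIntegral_mono_on (hint S)
            (integrableOn_const (measure_ne_top P S)) hSm
          intro ω hω; exact hω.1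
      _ = l * (P S).toReal := by rw [setIntegral_const, smul_eq_mul, mul_comm, measureReal_def]
  have hJ : l * (P (S' \ S)).toReal ≤ ∫ ω in S' \ S, V ω ∂P := by
    calc l * (P (S' \ S)).toReal = ∫ _ω in S' \ S, l ∂P := by
          rw [setIntegral_const, smul_eq_mul, mul_comm, measureReal_def]
      _ ≤ ∫ ω in S' \ S, V ω ∂P := by
          apply setIntegral_mono_on
            (integrableOn_const (measure_ne_top P _)) (hint _) hTm
          intro ω hω
          exact le_of_lt (lt_of_not_ge (fun h => hω.2 ⟨h, hω.1.2⟩))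
  have ha : (0:ℝ) ≤ (P S).toReal := ENNReal.toReal_nonneg
  have hb : (0:ℝ) ≤ (P (S' \ S)).toReal := ENNReal.toReal_nonneg
  have hmain : (∫ ω in S, V ω ∂P) * (P S').toReal
      ≤ (∫ ω in S', V ω ∂P) * (P S).toReal := by
    rw [hsplit, hms]; nlinarith [hI, hJ, ha, hb]
  refine ⟨hmain, fun h1 h2 => ?_⟩
  have ha' : 0 < (P S).toReal := ENNReal.toReal_pos h1.ne' (measure_ne_top P S)
  have hb' : 0 < (P S').toReal := ENNReal.toReal_pos h2.ne' (measure_ne_top P S')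
  rw [div_le_div_iff₀ ha' hb']
  exact hmain
end
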